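/- Let k be an even nonnegative integer, (N, ν) a measure space with ν a finite measure, r₀ > 0, δ ∈ (0, 1], and C > 0. For each even j with 0 ≤ j ≤ k let v_j : N → ℝ be a bounded measurable function, and let f : N × (0, r₀] → ℝ be measurable with |f(x,r) − Σ_{j even, 0 ≤ j ≤ k} v_j(x) r^{j−k−1}| ≤ C r^{δ−1} for all (x,r). Then there exists c ∈ ℝ such that ∫_N ( ∫_ε^{r₀} f(x,r) dr ) dν(x) − Σ_{j even, 0 ≤ j ≤ k−2} ( (∫_N v_j dν) / (k−j) ) ε^{j−k} − ( ∫_N v_k dν ) · log(1/ε) → c as ε → 0⁺. In particular the coefficient of log(1/ε) in the expansion is d = ∫_N v_k dν. -/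

import Mathlib

open MeasureTheory Filter Set intervalIntegral
open scoped Interval

private lemma meas_zpow' (m : ℤ) : Measurable fun r : ℝ => r ^ m := by
  rcases m with n | n
  · simpa using measurable_id.pow_const n
  · simp only [zpow_negSucc]; exact ((measurable_id (α := ℝ)).pow_const (n + 1)).inv

/-- Graham–Witten, equations (2.23)–(2.24) (case `k` even): the regularized area
`∫_N ∫_ε^{r₀} f dr dν` has an expansion
`c₀ε^{-k} + c₂ε^{-k+2} + ⋯ + c_{k-2}ε^{-2} + d·log(1/ε) + c_k + o(1)`,
with log coefficient `d = ∫_N v_k dν`. -/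
theorem stmt_4
    {N : Type*} [MeasurableSpace N] (ν : Measure N) [IsFiniteMeasure ν]
    (k : ℕ) (hk_even : Even k)
    (r₀ δ C : ℝ) (hr₀ : 0 < r₀) (hδ : δ ∈ Ioc (0 : ℝ) 1) (hC : 0 < C)
    (v : ℕ → N → ℝ)
    (hv_meas : ∀ j, Even j → j ≤ k → Measurable (v j))
    (hv_bdd : ∀ j, Even j → j ≤ k → ∃ M : ℝ, ∀ x, |v j x| ≤ M)
    (f : N → ℝ → ℝ)
    (hf_meas : Measurable (Function.uncurry f))
    (hf : ∀ x, ∀ r ∈ Ioc (0 : ℝ) r₀,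
      |f x r - ∑ j ∈ Finset.range (k + 1),
          (if Even j then v j x * r ^ ((j : ℤ) - (k : ℤ) - 1) else 0)|
        ≤ C * r ^ (δ - 1)) :
    ∃ c : ℝ,
      Tendsto (fun ε : ℝ =>
          (∫ x, (∫ r in ε..r₀, f x r) ∂ν)
          - ∑ j ∈ Finset.range (k - 1),
              (if Even j then ((∫ x, v j x ∂ν) / ((k : ℝ) - (j : ℝ))) * ε ^ ((j : ℤ) - (k : ℤ))
               else 0)
          - (∫ x, v k x ∂ν) * Real.log (1 / ε))
        (nhdsWithin 0 (Ioi 0)) (nhds c) := by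
  obtain ⟨hδ0, hδ1⟩ := hδ
  have hδ0' : (-1 : ℝ) < δ - 1 := by linarith
  -- the remainder function
  set S : N → ℝ → ℝ := fun x r => ∑ j ∈ Finset.range (k + 1),
      (if Even j then v j x * r ^ ((j : ℤ) - (k : ℤ) - 1) else 0) with hSdef
  set g : N → ℝ → ℝ := fun x r => f x r - S x r with hgdef
  have hgb : ∀ x, ∀ r ∈ Ioc (0:ℝ) r₀, |g x r| ≤ C * r ^ (δ - 1) := by
    intro x r hr; simpa [hgdef, hSdef] using hf x r hr
  have hS_meas : Measurable (Function.uncurry S) := by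
    show Measurable fun p : N × ℝ => ∑ j ∈ Finset.range (k + 1),
      (if Even j then v j p.1 * p.2 ^ ((j : ℤ) - (k : ℤ) - 1) else 0)
    apply Finset.measurable_sum
    intro j hj
    by_cases h : Even j
    · simp only [if_pos h]
      exact ((hv_meas j h (Nat.lt_succ_iff.mp (Finset.mem_range.mp hj))).comp
        measurable_fst).mul ((meas_zpow' _).comp measurable_snd)
    · simp only [if_neg h]; exact measurable_const
  have hg_meas : Measurable (Function.uncurry g) := hf_meas.sub hS_meas
  have hgx_meas : ∀ x, Measurable (g x) := fun x => hg_meas.comp measurable_prodMk_left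
  have hdom : IntervalIntegrable (fun r : ℝ => C * r ^ (δ - 1)) volume 0 r₀ :=
    (intervalIntegral.intervalIntegrable_rpow' hδ0').const_mul C
  have hdom' : IntegrableOn (fun r : ℝ => C * r ^ (δ - 1)) (Ioc 0 r₀) :=
    (intervalIntegrable_iff_integrableOn_Ioc_of_le hr₀.le).mp hdom
  have hg_int : ∀ x, IntegrableOn (g x) (Ioc 0 r₀) := by
    intro x
    refine hdom'.mono' (hgx_meas x).aestronglyMeasurable ?_
    filter_upwards [ae_restrict_mem measurableSet_Ioc] with r hr
    simpa [Real.norm_eq_abs] using hgb x r hr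
  have hg_ii : ∀ x, ∀ a b : ℝ, 0 ≤ a → a ≤ b → b ≤ r₀ →
      IntervalIntegrable (g x) volume a b := by
    intro x a b ha hab hbr
    rw [intervalIntegrable_iff_integrableOn_Ioc_of_le hab]
    exact (hg_int x).mono_set (Ioc_subset_Ioc ha hbr)
  have h0mem : ∀ ε : ℝ, 0 < ε → ε ≤ r₀ → (0:ℝ) ∉ [[ε, r₀]] := by
    intro ε hε hεr
    rw [uIcc_of_le hεr]
    rintro ⟨h1, -⟩; linarith
  have hterm_ii : ∀ (x : N) (j : ℕ) (ε : ℝ), 0 < ε → ε ≤ r₀ →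
      IntervalIntegrable (fun r : ℝ => if Even j then v j x * r ^ ((j:ℤ) - (k:ℤ) - 1) else 0)
        volume ε r₀ := by
    intro x j ε hε hεr
    by_cases h : Even j
    · simp only [if_pos h]
      exact (intervalIntegral.intervalIntegrable_zpow (Or.inr (h0mem ε hε hεr))).const_mul _
    · simp only [if_neg h]
      exact intervalIntegrable_const
  have hS_ii : ∀ (x : N) (ε : ℝ), 0 < ε → ε ≤ r₀ → IntervalIntegrable (S x) volume ε r₀ := by
    intro x ε hε hεr
    have := IntervalIntegrable.sum (μ := volume) (a := ε) (b := r₀)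
      (f := fun (j : ℕ) (r : ℝ) => if Even j then v j x * r ^ ((j:ℤ) - (k:ℤ) - 1) else 0)
      (Finset.range (k + 1)) (fun j _ => hterm_ii x j ε hε hεr)
    simpa [hSdef, Finset.sum_fn] using this
  -- the elementary antiderivative values
  set I : ℕ → ℝ → ℝ := fun j ε => ∫ r in ε..r₀, r ^ ((j:ℤ) - (k:ℤ) - 1) with hIdef
  -- per-x decomposition of the inner integral
  have key1 : ∀ (x : N) (ε : ℝ), 0 < ε → ε ≤ r₀ →
      (∫ r in ε..r₀, f x r) =
        (∑ j ∈ Finset.range (k + 1), (if Even j then v j x * I j ε else 0))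
          + ∫ r in ε..r₀, g x r := by
    intro x ε hε hεr
    have hfx : ∀ r : ℝ, f x r = S x r + g x r := by intro r; simp [hgdef]
    calc (∫ r in ε..r₀, f x r) = ∫ r in ε..r₀, (S x r + g x r) := by
            simp_rw [hfx]
      _ = (∫ r in ε..r₀, S x r) + ∫ r in ε..r₀, g x r :=
            intervalIntegral.integral_add (hS_ii x ε hε hεr) (hg_ii x ε r₀ hε.le hεr le_rfl)
      _ = (∑ j ∈ Finset.range (k + 1), (if Even j then v j x * I j ε else 0))
            + ∫ r in ε..r₀, g x r := by
            congr 1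
            rw [hSdef]
            beta_reduce
            rw [intervalIntegral.integral_finset_sum (fun j _ => hterm_ii x j ε hε hεr)]
            refine Finset.sum_congr rfl fun j _ => ?_
            by_cases h : Even j
            · simp only [if_pos h, intervalIntegral.integral_const_mul, hIdef]
            · simp only [if_neg h, intervalIntegral.integral_zero]
  -- integrability of the v j over ν
  have hv_int : ∀ j, Even j → j ≤ k → Integrable (v j) ν := by
    intro j hje hjk
    obtain ⟨M, hM⟩ := hv_bdd j hje hjk
    exact (integrable_const M).mono' (hv_meas j hje hjk).aestronglyMeasurable
      (ae_of_all _ fun x => by simpa [Real.norm_eq_abs] using hM x)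
  -- tails
  set A : ℝ → N → ℝ := fun ε x => ∫ r in ε..r₀, g x r with hAdef
  have hIval : ∀ a b : ℝ, (∫ r in a..b, C * r ^ (δ - 1)) = C * ((b ^ δ - a ^ δ) / δ) := by
    intro a b
    rw [intervalIntegral.integral_const_mul, integral_rpow (Or.inl hδ0'), sub_add_cancel]
  have hA_bnd : ∀ ε, 0 ≤ ε → ε ≤ r₀ → ∀ x, ‖A ε x‖ ≤ C * (r₀ ^ δ / δ) := by
    intro ε hε hεr x
    have h1 : ‖∫ r in ε..r₀, g x r‖ ≤ |∫ r in ε..r₀, C * r ^ (δ - 1)| := by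
      apply intervalIntegral.norm_integral_le_abs_of_norm_le ?_
        (hdom.mono_set (by rw [uIcc_of_le hεr, uIcc_of_le hr₀.le]; exact Icc_subset_Icc hε le_rfl))
      filter_upwards [ae_restrict_mem measurableSet_uIoc] with r hr
      rw [uIoc_of_le hεr] at hr
      exact (by simpa [Real.norm_eq_abs] using hgb x r ⟨lt_of_le_of_lt hε hr.1, hr.2⟩)
    rw [hIval] at h1
    have h2 : (0:ℝ) ≤ ε ^ δ := Real.rpow_nonneg hε δ
    have h3 : ε ^ δ ≤ r₀ ^ δ := Real.rpow_le_rpow hε hεr hδ0.le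
    have h4 : |C * ((r₀ ^ δ - ε ^ δ) / δ)| ≤ C * (r₀ ^ δ / δ) := by
      rw [abs_of_nonneg (mul_nonneg hC.le (div_nonneg (by linarith) hδ0.le))]
      gcongr
      linarith
    exact (h1.trans h4)
  have hA_meas : ∀ ε, 0 ≤ ε → ε ≤ r₀ → AEStronglyMeasurable (A ε) ν := by
    intro ε hε hεr
    have h1 : A ε = fun x => ∫ r in Ioc ε r₀, g x r := by
      funext x
      simp only [hAdef]
      exact intervalIntegral.integral_of_le hεr
    rw [h1]
    exact (hg_meas.stronglyMeasurable.integral_prod_right).aestronglyMeasurable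
  have hA_int : ∀ ε, 0 ≤ ε → ε ≤ r₀ → Integrable (A ε) ν := fun ε hε hεr =>
    (integrable_const (C * (r₀ ^ δ / δ))).mono' (hA_meas ε hε hεr)
      (ae_of_all _ (hA_bnd ε hε hεr))
  -- put the inner decomposition under the ν-integral
  have key2 : ∀ ε, 0 < ε → ε ≤ r₀ →
      (∫ x, (∫ r in ε..r₀, f x r) ∂ν) =
        (∑ j ∈ Finset.range (k + 1), (if Even j then (∫ x, v j x ∂ν) * I j ε else 0))
          + ∫ x, A ε x ∂ν := by
    intro ε hε hεr
    have h1 : (fun x => ∫ r in ε..r₀, f x r) =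
        fun x => (∑ j ∈ Finset.range (k + 1), (if Even j then v j x * I j ε else 0)) + A ε x := by
      funext x; exact key1 x ε hε hεr
    rw [h1]
    have hint_j : ∀ j ∈ Finset.range (k + 1),
        Integrable (fun x => if Even j then v j x * I j ε else 0) ν := by
      intro j hj
      by_cases h : Even j
      · simp only [if_pos h]
        exact (hv_int j h (Nat.lt_succ_iff.mp (Finset.mem_range.mp hj))).mul_const _
      · simp only [if_neg h]
        exact integrable_const 0
    rw [integral_add (integrable_finset_sum _ hint_j) (hA_int ε hε.le hεr)]
    congr 1
    rw [integral_finset_sum _ hint_j]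
    refine Finset.sum_congr rfl fun j hj => ?_
    by_cases h : Even j
    · simp only [if_pos h, MeasureTheory.integral_mul_const]
    · simp [if_neg h]
  -- values of the elementary integrals
  have hI_lt : ∀ j ∈ Finset.range (k - 1), ∀ ε : ℝ, 0 < ε → ε ≤ r₀ →
      I j ε = (r₀ ^ ((j:ℤ) - (k:ℤ)) - ε ^ ((j:ℤ) - (k:ℤ))) / ((j:ℝ) - (k:ℝ)) := by
    intro j hj ε hε hεr
    have hjk : j < k := lt_of_lt_of_le (Finset.mem_range.mp hj) (Nat.sub_le k 1)
    have hne : ((j:ℤ) - (k:ℤ) - 1) ≠ -1 := by omega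
    simp only [hIdef]
    rw [integral_zpow (Or.inr ⟨hne, h0mem ε hε hεr⟩)]
    have h2 : (j:ℤ) - (k:ℤ) - 1 + 1 = (j:ℤ) - (k:ℤ) := by ring
    rw [h2]
    push_cast
    ring
  have hI_k : ∀ ε : ℝ, 0 < ε → ε ≤ r₀ → I k ε = Real.log r₀ - Real.log ε := by
    intro ε hε hεr
    have h1 : ((k:ℤ) - (k:ℤ) - 1) = -1 := by ring
    simp only [hIdef, h1]
    simp only [zpow_neg_one]
    rw [integral_inv (h0mem ε hε hεr), Real.log_div hr₀.ne' hε.ne']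
  -- split off the top term of the sum
  have hsplit : ∀ ε : ℝ,
      (∑ j ∈ Finset.range (k + 1), (if Even j then (∫ x, v j x ∂ν) * I j ε else 0)) =
        (∑ j ∈ Finset.range (k - 1), (if Even j then (∫ x, v j x ∂ν) * I j ε else 0))
          + (∫ x, v k x ∂ν) * I k ε := by
    intro ε
    rcases Nat.eq_zero_or_pos k with hk0 | hkpos
    · subst hk0; simp
    · have hk2 : 2 ≤ k := by obtain ⟨m, hm⟩ := hk_even; omega
      have h1 : k + 1 = (k - 1) + 1 + 1 := by omega
      have hk1 : k - 1 + 1 = k := by omega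
      rw [h1, Finset.sum_range_succ, Finset.sum_range_succ, hk1]
      have hodd : ¬ Even (k - 1) := by
        obtain ⟨m, hm⟩ := hk_even; rintro ⟨l, hl⟩; omega
      simp [hodd, hk_even]
  -- the constant term
  set c₁ : ℝ := (∑ j ∈ Finset.range (k - 1),
      (if Even j then (∫ x, v j x ∂ν) * (-(r₀ ^ ((j:ℤ) - (k:ℤ))) / ((k:ℝ) - (j:ℝ))) else 0))
    + (∫ x, v k x ∂ν) * Real.log r₀ with hc₁def
  -- the main algebraic identity
  have key3 : ∀ ε : ℝ, 0 < ε → ε ≤ r₀ →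
      (∫ x, (∫ r in ε..r₀, f x r) ∂ν)
          - (∑ j ∈ Finset.range (k - 1),
              (if Even j then ((∫ x, v j x ∂ν) / ((k : ℝ) - (j : ℝ))) * ε ^ ((j : ℤ) - (k : ℤ))
               else 0))
          - (∫ x, v k x ∂ν) * Real.log (1 / ε) = c₁ + ∫ x, A ε x ∂ν := by
    intro ε hε hεr
    rw [key2 ε hε hεr, hsplit ε, hI_k ε hε hεr, one_div, Real.log_inv, hc₁def]
    have hsum : (∑ j ∈ Finset.range (k - 1), (if Even j then (∫ x, v j x ∂ν) * I j ε else 0))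
        - (∑ j ∈ Finset.range (k - 1),
            (if Even j then ((∫ x, v j x ∂ν) / ((k : ℝ) - (j : ℝ))) * ε ^ ((j : ℤ) - (k : ℤ))
             else 0))
        = ∑ j ∈ Finset.range (k - 1),
            (if Even j then (∫ x, v j x ∂ν) * (-(r₀ ^ ((j:ℤ) - (k:ℤ))) / ((k:ℝ) - (j:ℝ))) else 0) := by
      rw [← Finset.sum_sub_distrib]
      refine Finset.sum_congr rfl fun j hj => ?_
      by_cases h : Even j
      · simp only [if_pos h]
        rw [hI_lt j hj ε hε hεr]
        have hjk : j < k := lt_of_lt_of_le (Finset.mem_range.mp hj) (Nat.sub_le k 1)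
        have hjk' : (j:ℝ) < (k:ℝ) := by exact_mod_cast hjk
        have hne : (k:ℝ) - (j:ℝ) ≠ 0 := by linarith
        have hne' : (j:ℝ) - (k:ℝ) ≠ 0 := by linarith
        field_simp
        ring
      · simp [if_neg h]
    linarith [hsum]
  -- the error term tends to zero
  have hptw : ∀ ε : ℝ, 0 < ε → ε ≤ r₀ → ∀ x, A ε x - A 0 x = -∫ r in (0:ℝ)..ε, g x r := by
    intro ε hε hεr x
    have h1 := intervalIntegral.integral_add_adjacent_intervals
      (hg_ii x 0 ε le_rfl hε.le hεr) (hg_ii x ε r₀ hε.le hεr le_rfl)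
    simp only [hAdef]
    linarith [h1]
  have hptwb : ∀ ε : ℝ, 0 < ε → ε ≤ r₀ → ∀ x, ‖A ε x - A 0 x‖ ≤ C * (ε ^ δ / δ) := by
    intro ε hε hεr x
    rw [hptw ε hε hεr x, norm_neg]
    have h1 : ‖∫ r in (0:ℝ)..ε, g x r‖ ≤ |∫ r in (0:ℝ)..ε, C * r ^ (δ - 1)| := by
      apply intervalIntegral.norm_integral_le_abs_of_norm_le ?_
        (hdom.mono_set (by rw [uIcc_of_le hε.le, uIcc_of_le hr₀.le]; exact Icc_subset_Icc le_rfl hεr))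
      filter_upwards [ae_restrict_mem measurableSet_uIoc] with r hr
      rw [uIoc_of_le hε.le] at hr
      exact (by simpa [Real.norm_eq_abs] using hgb x r ⟨hr.1, hr.2.trans hεr⟩)
    rw [hIval, Real.zero_rpow hδ0.ne', sub_zero] at h1
    rwa [abs_of_nonneg (mul_nonneg hC.le (div_nonneg (Real.rpow_nonneg hε.le δ) hδ0.le))] at h1
  have hbig : ∀ ε : ℝ, 0 < ε → ε ≤ r₀ →
      ‖(∫ x, A ε x ∂ν) - ∫ x, A 0 x ∂ν‖ ≤ (C * (ε ^ δ / δ)) * (ν univ).toReal := by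
    intro ε hε hεr
    rw [← integral_sub (hA_int ε hε.le hεr) (hA_int 0 le_rfl hr₀.le)]
    exact norm_integral_le_of_norm_le_const (ae_of_all _ (hptwb ε hε hεr))
  have hr0 : Tendsto (fun ε : ℝ => (C * (ε ^ δ / δ)) * (ν univ).toReal)
      (nhdsWithin 0 (Ioi 0)) (nhds 0) := by
    have h1 : ContinuousAt (fun x : ℝ => x ^ δ) 0 :=
      Real.continuousAt_rpow_const 0 δ (Or.inr hδ0.le)
    have h2 : Tendsto (fun ε : ℝ => ε ^ δ) (nhdsWithin 0 (Ioi 0)) (nhds 0) := by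
      have h3 := h1.tendsto
      rw [Real.zero_rpow hδ0.ne'] at h3
      exact h3.mono_left nhdsWithin_le_nhds
    have h4 := ((h2.const_mul C).div_const δ).mul_const ((ν univ).toReal)
    simpa [mul_div_assoc] using h4
  have hdiff : Tendsto (fun ε : ℝ => (∫ x, A ε x ∂ν) - ∫ x, A 0 x ∂ν)
      (nhdsWithin 0 (Ioi 0)) (nhds 0) := by
    apply squeeze_zero_norm' ?_ hr0
    filter_upwards [Ioc_mem_nhdsGT_of_mem (show (0:ℝ) ∈ Ico 0 r₀ from ⟨le_rfl, hr₀⟩)] with ε hε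
    exact hbig ε hε.1 hε.2
  -- conclusion
  refine ⟨c₁ + ∫ x, A 0 x ∂ν, ?_⟩
  have hlim : Tendsto (fun ε : ℝ => c₁ + ∫ x, A ε x ∂ν)
      (nhdsWithin 0 (Ioi 0)) (nhds (c₁ + ∫ x, A 0 x ∂ν)) := by
    have h5 := hdiff.const_add (c₁ + ∫ x, A 0 x ∂ν)
    rw [add_zero] at h5
    refine h5.congr fun ε => ?_
    ring
  apply hlim.congr'
  filter_upwards [Ioc_mem_nhdsGT_of_mem (show (0:ℝ) ∈ Ico 0 r₀ from ⟨le_rfl, hr₀⟩)] with ε hε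
  exact (key3 ε hε.1 hε.2).symm
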